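/- For any two policies π₁ and π₂ in an MDP with discount factor γ ∈ (0,1), the performance difference satisfies η(π₁) − η(π₂) = Σ_s ρ_{π₁}(s) (Q_{π₂}(s, π₁(s)) − V_{π₂}(s)), where ρ_{π₁}(s) = Σ_{t≥0} γ^t P(s_t = s | π₁) is the unnormalized discounted state visitation frequency of π₁, Q_{π₂} and V_{π₂} are the action-value and value functions of π₂, and η(π) = E_{τ∼π}[Σ_{t≥0} γ^t r(s_t,a_t)]. -/

import Mathlib

/-- State distribution at time `t` under deterministic policy `π`,
transition kernel `T` and initial distribution `ρ0`. -/
def stateDist {S A : Type} [Fintype S] (T : S → A → S → ℝ) (ρ0 : S → ℝ)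
    (π : S → A) : ℕ → S → ℝ
  | 0 => ρ0
  | t + 1 => fun s' => ∑ s : S, stateDist T ρ0 π t s * T s (π s) s'

/-- Unnormalized discounted state visitation frequency. -/
noncomputable def visitFreq {S A : Type} [Fintype S] (γ : ℝ) (T : S → A → S → ℝ)
    (ρ0 : S → ℝ) (π : S → A) (s : S) : ℝ :=
  ∑' t : ℕ, γ ^ t * stateDist T ρ0 π t s

/-- Expected discounted return `η(π)` starting from `ρ0`. -/
noncomputable def perf {S A : Type} [Fintype S] (γ : ℝ) (T : S → A → S → ℝ)
    (ρ0 : S → ℝ) (r : S → A → ℝ) (π : S → A) : ℝ :=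
  ∑' t : ℕ, γ ^ t * ∑ s : S, stateDist T ρ0 π t s * r s (π s)

/-- Value function `V_π(s)`: the return starting deterministically from `s`. -/
noncomputable def valueFn {S A : Type} [Fintype S] [DecidableEq S] (γ : ℝ)
    (T : S → A → S → ℝ) (r : S → A → ℝ) (π : S → A) (s : S) : ℝ :=
  perf γ T (fun s' => if s' = s then 1 else 0) r π

/-- Action-value function `Q_π(s,a)`. -/
noncomputable def qFn {S A : Type} [Fintype S] [DecidableEq S] (γ : ℝ)
    (T : S → A → S → ℝ) (r : S → A → ℝ) (π : S → A) (s : S) (a : A) : ℝ :=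
  r s a + γ * ∑ s' : S, T s a s' * valueFn γ T r π s'

set_option linter.unusedSectionVars false
section aux
variable {S A : Type} [Fintype S] [DecidableEq S]
variable (T : S → A → S → ℝ) (ρ0 : S → ℝ) (π : S → A)

lemma sd_lin (t : ℕ) (s : S) :
    stateDist T ρ0 π t s =
      ∑ s0 : S, ρ0 s0 * stateDist T (fun s' => if s' = s0 then 1 else 0) π t s := by
  induction t generalizing s with
  | zero =>
    simp only [stateDist, mul_ite, mul_one, mul_zero]
    rw [Finset.sum_ite_eq Finset.univ s ρ0]
    simp
  | succ t ih =>
    simp only [stateDist, ih, Finset.sum_mul]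
    rw [Finset.sum_comm]
    simp [Finset.mul_sum, mul_assoc]

lemma sd_nonneg (hT : ∀ s a, (∀ s', 0 ≤ T s a s') ∧ ∑ s' : S, T s a s' = 1)
    (hρ0 : ∀ s, 0 ≤ ρ0 s) : ∀ t s, 0 ≤ stateDist T ρ0 π t s := by
  intro t
  induction t with
  | zero => exact hρ0
  | succ t ih =>
    intro s'
    exact Finset.sum_nonneg fun s _ => mul_nonneg (ih s) ((hT s (π s)).1 s')

lemma sd_sum (hT : ∀ s a, (∀ s', 0 ≤ T s a s') ∧ ∑ s' : S, T s a s' = 1) (t : ℕ) :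
    ∑ s : S, stateDist T ρ0 π t s = ∑ s : S, ρ0 s := by
  induction t with
  | zero => rfl
  | succ t ih =>
    simp only [stateDist]
    rw [Finset.sum_comm]
    simp only [← Finset.mul_sum]
    calc ∑ s : S, stateDist T ρ0 π t s * ∑ s' : S, T s (π s) s'
        = ∑ s : S, stateDist T ρ0 π t s := by
          refine Finset.sum_congr rfl fun s _ => ?_
          rw [(hT s (π s)).2, mul_one]
      _ = _ := ih

lemma sd_le_one (hT : ∀ s a, (∀ s', 0 ≤ T s a s') ∧ ∑ s' : S, T s a s' = 1)
    (hρ0 : (∀ s, 0 ≤ ρ0 s) ∧ ∑ s : S, ρ0 s = 1) (t : ℕ) (s : S) :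
    stateDist T ρ0 π t s ≤ 1 := by
  have h := sd_sum T ρ0 π hT t
  rw [hρ0.2] at h
  calc stateDist T ρ0 π t s ≤ ∑ s' : S, stateDist T ρ0 π t s' :=
        Finset.single_le_sum (fun s' _ => sd_nonneg T ρ0 π hT hρ0.1 t s') (Finset.mem_univ s)
    _ = 1 := h

lemma summable_geom_bdd {γ : ℝ} (hγ : 0 < γ ∧ γ < 1) (C : ℝ) {g : ℕ → ℝ}
    (h : ∀ t, |g t| ≤ C) : Summable fun t => γ ^ t * g t := by
  refine Summable.of_norm_bounded (g := fun t => C * γ ^ t)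
      ((summable_geometric_of_lt_one hγ.1.le hγ.2).mul_left C) fun t => ?_
  rw [Real.norm_eq_abs, abs_mul, abs_pow, abs_of_pos hγ.1, mul_comm]
  exact mul_le_mul_of_nonneg_right (h t) (pow_nonneg hγ.1.le t)

lemma inner_bdd (hT : ∀ s a, (∀ s', 0 ≤ T s a s') ∧ ∑ s' : S, T s a s' = 1)
    (hρ0 : (∀ s, 0 ≤ ρ0 s) ∧ ∑ s : S, ρ0 s = 1) (w : S → ℝ) (t : ℕ) :
    |∑ s : S, stateDist T ρ0 π t s * w s| ≤ ∑ s : S, |w s| := by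
  calc |∑ s : S, stateDist T ρ0 π t s * w s|
      ≤ ∑ s : S, |stateDist T ρ0 π t s * w s| := Finset.abs_sum_le_sum_abs _ _
    _ ≤ ∑ s : S, |w s| := by
        refine Finset.sum_le_sum fun s _ => ?_
        rw [abs_mul]
        have h0 := sd_nonneg T ρ0 π hT hρ0.1 t s
        rw [abs_of_nonneg h0]
        exact mul_le_of_le_one_left (abs_nonneg _) (sd_le_one T ρ0 π hT hρ0 t s)

lemma hδ (s0 : S) : (∀ s : S, 0 ≤ if s = s0 then (1:ℝ) else 0) ∧
    ∑ s : S, (if s = s0 then (1:ℝ) else 0) = 1 := by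
  constructor
  · intro s; split <;> norm_num
  · simp

lemma summable_inner {γ : ℝ} (hγ : 0 < γ ∧ γ < 1)
    (hT : ∀ s a, (∀ s', 0 ≤ T s a s') ∧ ∑ s' : S, T s a s' = 1)
    (hρ0 : (∀ s, 0 ≤ ρ0 s) ∧ ∑ s : S, ρ0 s = 1) (w : S → ℝ) :
    Summable fun t => γ ^ t * ∑ s : S, stateDist T ρ0 π t s * w s :=
  summable_geom_bdd hγ (∑ s : S, |w s|) (inner_bdd T ρ0 π hT hρ0 w)

lemma perf_lin {γ : ℝ} (hγ : 0 < γ ∧ γ < 1)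
    (hT : ∀ s a, (∀ s', 0 ≤ T s a s') ∧ ∑ s' : S, T s a s' = 1) (r : S → A → ℝ) :
    perf γ T ρ0 r π = ∑ s0 : S, ρ0 s0 * valueFn γ T r π s0 := by
  have key : ∀ t : ℕ, γ ^ t * ∑ s : S, stateDist T ρ0 π t s * r s (π s)
      = ∑ s0 : S, ρ0 s0 * (γ ^ t * ∑ s : S,
          stateDist T (fun s' => if s' = s0 then 1 else 0) π t s * r s (π s)) := by
    intro t
    conv_lhs => rw [show (∑ s : S, stateDist T ρ0 π t s * r s (π s))
        = ∑ s : S, (∑ s0 : S, ρ0 s0 *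
            stateDist T (fun s' => if s' = s0 then 1 else 0) π t s) * r s (π s) from
        Finset.sum_congr rfl fun s _ => by rw [← sd_lin]]
    simp only [Finset.sum_mul, Finset.mul_sum]
    rw [Finset.sum_comm]
    exact Finset.sum_congr rfl fun s0 _ => Finset.sum_congr rfl fun s _ => by ring
  unfold perf
  simp only [key]
  rw [Summable.tsum_finsetSum (fun s0 _ => Summable.mul_left _
    (summable_inner T _ π hγ hT (hδ s0) (fun s => r s (π s))))]
  exact Finset.sum_congr rfl fun s0 _ => tsum_mul_left

end aux

/-- Performance difference lemma: for any two deterministic policies `π₁, π₂`,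
`η(π₁) − η(π₂) = Σ_s ρ_{π₁}(s) (Q_{π₂}(s, π₁(s)) − V_{π₂}(s))`. -/
theorem perf_difference {S A : Type} [Fintype S] [DecidableEq S]
    (γ : ℝ) (hγ : 0 < γ ∧ γ < 1)
    (T : S → A → S → ℝ) (hT : ∀ s a, (∀ s', 0 ≤ T s a s') ∧ ∑ s' : S, T s a s' = 1)
    (ρ0 : S → ℝ) (hρ0 : (∀ s, 0 ≤ ρ0 s) ∧ ∑ s : S, ρ0 s = 1)
    (r : S → A → ℝ) (π₁ π₂ : S → A) :
    perf γ T ρ0 r π₁ - perf γ T ρ0 r π₂ =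
      ∑ s : S, visitFreq γ T ρ0 π₁ s *
        (qFn γ T r π₂ s (π₁ s) - valueFn γ T r π₂ s) := by
  set V : S → ℝ := valueFn γ T r π₂ with hVdef
  set Aa : S → ℝ := fun s => qFn γ T r π₂ s (π₁ s) - V s with hAdef
  -- Step 1: push the visitFreq tsum out of the finite sum
  have h1 : ∀ s : S, visitFreq γ T ρ0 π₁ s * Aa s
      = ∑' t : ℕ, γ ^ t * (stateDist T ρ0 π₁ t s * Aa s) := by
    intro s
    rw [visitFreq, ← tsum_mul_right]
    simp [mul_assoc]
  have hsum1 : ∀ s : S, Summable fun t : ℕ => γ ^ t * (stateDist T ρ0 π₁ t s * Aa s) := by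
    intro s
    refine summable_geom_bdd hγ |Aa s| fun t => ?_
    rw [abs_mul, abs_of_nonneg (sd_nonneg T ρ0 π₁ hT hρ0.1 t s)]
    exact mul_le_of_le_one_left (abs_nonneg _) (sd_le_one T ρ0 π₁ hT hρ0 t s)
  rw [Finset.sum_congr rfl fun s _ => h1 s, ← Summable.tsum_finsetSum (fun s _ => hsum1 s)]
  -- Step 2: per-time-step identity
  have key : ∀ t : ℕ, ∑ s : S, γ ^ t * (stateDist T ρ0 π₁ t s * Aa s)
      = (γ ^ t * ∑ s : S, stateDist T ρ0 π₁ t s * r s (π₁ s))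
        + ((γ ^ (t+1) * ∑ s : S, stateDist T ρ0 π₁ (t+1) s * V s)
          - γ ^ t * ∑ s : S, stateDist T ρ0 π₁ t s * V s) := by
    intro t
    have hrec : ∀ s' : S, stateDist T ρ0 π₁ (t+1) s'
        = ∑ s : S, stateDist T ρ0 π₁ t s * T s (π₁ s) s' := fun _ => rfl
    simp only [hAdef, qFn, ← hVdef, hrec]
    simp only [Finset.mul_sum, Finset.sum_mul]
    rw [Finset.sum_comm (s := Finset.univ) (t := Finset.univ)
      (f := fun x i => γ ^ (t+1) * (stateDist T ρ0 π₁ t i * T i (π₁ i) x * V x))]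
    rw [← Finset.sum_sub_distrib, ← Finset.sum_add_distrib]
    refine Finset.sum_congr rfl fun i _ => ?_
    have hinner : γ ^ t * (stateDist T ρ0 π₁ t i * ∑ x : S, γ * (T i (π₁ i) x * V x))
        = ∑ x : S, γ ^ (t+1) * (stateDist T ρ0 π₁ t i * T i (π₁ i) x * V x) := by
      rw [Finset.mul_sum, Finset.mul_sum]
      exact Finset.sum_congr rfl fun x _ => by ring
    have halg : γ ^ t * (stateDist T ρ0 π₁ t i *
        (r i (π₁ i) + (∑ x : S, γ * (T i (π₁ i) x * V x)) - V i))
        = γ ^ t * (stateDist T ρ0 π₁ t i * r i (π₁ i))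
          + (γ ^ t * (stateDist T ρ0 π₁ t i * ∑ x : S, γ * (T i (π₁ i) x * V x))
            - γ ^ t * (stateDist T ρ0 π₁ t i * V i)) := by ring
    rw [halg, hinner]
  simp only [key]
  -- Step 3: telescoping
  have ha : Summable fun t : ℕ => γ ^ t * ∑ s : S, stateDist T ρ0 π₁ t s * r s (π₁ s) :=
    summable_inner T ρ0 π₁ hγ hT hρ0 _
  have hb : Summable fun t : ℕ => γ ^ t * ∑ s : S, stateDist T ρ0 π₁ t s * V s :=
    summable_inner T ρ0 π₁ hγ hT hρ0 _
  have hb' : Summable fun t : ℕ => γ ^ (t+1) * ∑ s : S, stateDist T ρ0 π₁ (t+1) s * V s := by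
    have heq : ∀ t : ℕ, γ ^ (t+1) * ∑ s : S, stateDist T ρ0 π₁ (t+1) s * V s
        = γ ^ t * (γ * ∑ s : S, stateDist T ρ0 π₁ (t+1) s * V s) := fun t => by ring
    simp only [heq]
    refine summable_geom_bdd hγ (γ * ∑ s : S, |V s|) fun t => ?_
    rw [abs_mul, abs_of_pos hγ.1]
    exact mul_le_mul_of_nonneg_left (inner_bdd T ρ0 π₁ hT hρ0 V (t+1)) hγ.1.le
  rw [Summable.tsum_add ha (hb'.sub hb), Summable.tsum_sub hb' hb]
  have hshift : ∑' t : ℕ, γ ^ (t+1) * ∑ s : S, stateDist T ρ0 π₁ (t+1) s * V s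
      = (∑' t : ℕ, γ ^ t * ∑ s : S, stateDist T ρ0 π₁ t s * V s)
        - γ ^ 0 * ∑ s : S, stateDist T ρ0 π₁ 0 s * V s := by
    rw [Summable.tsum_eq_zero_add hb]; ring
  rw [hshift]
  have hperf1 : (∑' t : ℕ, γ ^ t * ∑ s : S, stateDist T ρ0 π₁ t s * r s (π₁ s))
      = perf γ T ρ0 r π₁ := rfl
  have hperf2 : γ ^ 0 * ∑ s : S, stateDist T ρ0 π₁ 0 s * V s = perf γ T ρ0 r π₂ := by
    rw [pow_zero, one_mul, perf_lin T ρ0 π₂ hγ hT r]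
    rfl
  rw [hperf1, hperf2]
  ring
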